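/- Let $R$ be a $\mathbb{Z}_p$-algebra which is $p$-torsion free, let $M$ be a finite free $R$-module of rank $h$, and let $M' \subseteq M$ be an $R$-submodule with $pM \subseteq M' \subseteq M$ such that $M'/pM$ and $M/M'$ are free $R/pR$-modules of ranks $h - d$ and $d$ respectively. Suppose $F : M \to M$ is an additive map with $F(M') \subseteq pM$ and such that $M'/F(M')$ is a free $R/pR$-module of rank $h-d$. Then $F(M') = pM$. -/

import Mathlib

open Module

/-- key step of Frobenius untwisting. Let `R` be a
commutative ring in which `p` is a nonzerodivisor (e.g. a `p`-torsion-free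
`ℤ_p`-algebra), `M` a finite free `R`-module of rank `h`, and `pM ⊆ M' ⊆ M` a
submodule such that `M'/pM` and `M/M'` are free `R/pR`-modules of ranks `h-d`
and `d`. If `F : M → M` is additive with `F(M') ⊆ pM` and `M'/F(M')` is free
of rank `h-d` over `R/pR`, then `F(M') = pM`.

Here `P` is the submodule `pM`, `N` the submodule whose underlying set is
`F(M')`, and freeness of rank `r` over `R/pR` is expressed via an `R`-linear
isomorphism with `(R/pR)^r`. -/
theorem stmt_8 (R : Type*) [CommRing R] (p : ℕ) [Fact p.Prime]
    (hp : ∀ r : R, (p : R) * r = 0 → r = 0)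
    (M : Type*) [AddCommGroup M] [Module R M]
    [Module.Free R M] [Module.Finite R M]
    (h d : ℕ) (hdh : d ≤ h) (hM : finrank R M = h)
    (P M' : Submodule R M)
    (hP : ∀ x : M, x ∈ P ↔ ∃ m : M, x = (p : R) • m)
    (hPM' : P ≤ M')
    (e₁ : (M' ⧸ (P.comap M'.subtype)) ≃ₗ[R] (Fin (h - d) → R ⧸ Ideal.span {(p : R)}))
    (e₂ : (M ⧸ M') ≃ₗ[R] (Fin d → R ⧸ Ideal.span {(p : R)}))
    (F : M →+ M)
    (hF : ∀ x ∈ M', F x ∈ P)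
    (N : Submodule R M) (hN : (N : Set M) = F '' (M' : Set M))
    (e₃ : (M' ⧸ (N.comap M'.subtype)) ≃ₗ[R] (Fin (h - d) → R ⧸ Ideal.span {(p : R)})) :
    N = P := by
  have hNP : N ≤ P := by
    intro x hx
    have hx' : x ∈ (N : Set M) := hx
    rw [hN] at hx'
    obtain ⟨y, hy, rfl⟩ := hx'
    exact hF y hy
  have hle : (N.comap M'.subtype) ≤ (P.comap M'.subtype) := fun x hx => hNP hx
  let q : (M' ⧸ (N.comap M'.subtype)) →ₗ[R] (M' ⧸ (P.comap M'.subtype)) :=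
    Submodule.mapQ _ _ LinearMap.id hle
  have hq_surj : Function.Surjective q := by
    intro y
    obtain ⟨z, rfl⟩ := Submodule.Quotient.mk_surjective _ y
    exact ⟨Submodule.Quotient.mk z, by simp [q, Submodule.mapQ_apply]⟩
  let g := (e₁.toLinearMap.comp q).comp e₃.symm.toLinearMap
  have hg_surj : Function.Surjective g :=
    e₁.surjective.comp (hq_surj.comp e₃.symm.surjective)
  have hg_inj : Function.Injective g :=
    OrzechProperty.injective_of_surjective_endomorphism g hg_surj
  have hq_inj : Function.Injective q := by
    intro x y hxy
    apply e₃.injective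
    apply hg_inj
    simp [g, hxy]
  have hPN : P ≤ N := by
    intro x hx
    have hxM' : x ∈ M' := hPM' hx
    have h0 : q (Submodule.Quotient.mk ⟨x, hxM'⟩) = 0 := by
      rw [Submodule.mapQ_apply]
      exact (Submodule.Quotient.mk_eq_zero _).mpr hx
    have hz := hq_inj (h0.trans (map_zero q).symm)
    have hmem := (Submodule.Quotient.mk_eq_zero (N.comap M'.subtype)).mp hz
    simpa using hmem
  exact le_antisymm hNP hPN
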